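/- Let (Ω,μ) be a measure space, let p ∈ (1,∞), let n ∈ ℕ, and let {X₁,…,Xₙ} and {Y₁,…,Yₙ} be measurable partitions of Ω. Then for every bounded linear operator R : B(L¹(Ω), L^p(Ω)) → L^p(Ω) and every U ∈ B(L¹(Ω), L^p(Ω)), one has (Σ_{i=1}^{n} ‖χ_{Xᵢ} · R(χ_{Yᵢ}U)‖_p^p)^{1/p} ≤ ‖R‖ ‖U‖. -/

import Mathlib

open MeasureTheory
open scoped ENNReal

/-- sign coefficient -/
noncomputable def pSgn (b : Bool) : ℂ := if b then 1 else -1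

lemma pSgn_norm (b : Bool) : ‖pSgn b‖ = 1 := by cases b <;> simp [pSgn]

lemma pSgn_not (b : Bool) : pSgn (!b) = - pSgn b := by cases b <;> simp [pSgn]

/-- two point convexity inequality in `ℝ≥0∞` -/
lemma two_point {p : ℝ} (hp : 1 ≤ p) (a w : ℂ) :
    2 * (‖w‖₊ : ℝ≥0∞) ^ p ≤ (‖a + w‖₊ : ℝ≥0∞) ^ p + (‖a - w‖₊ : ℝ≥0∞) ^ p := by
  have hreal : 2 * ‖w‖ ≤ ‖a + w‖ + ‖a - w‖ := by
    have e1 : a + w - (a - w) = (2 : ℝ) • w := by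
      rw [two_smul]; ring
    have e2 : ‖(2 : ℝ) • w‖ = 2 * ‖w‖ := by rw [norm_smul]; simp
    calc 2 * ‖w‖ = ‖a + w - (a - w)‖ := by rw [e1, e2]
      _ ≤ ‖a + w‖ + ‖a - w‖ := norm_sub_le _ _
  have hnn : (‖w‖₊ : ℝ≥0∞) ≤ 2⁻¹ * ‖a + w‖₊ + 2⁻¹ * ‖a - w‖₊ := by
    have h1 : ENNReal.ofReal (2 * ‖w‖) ≤ ENNReal.ofReal (‖a + w‖ + ‖a - w‖) :=
      ENNReal.ofReal_le_ofReal hreal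
    rw [ENNReal.ofReal_mul (by norm_num), ENNReal.ofReal_add (norm_nonneg _) (norm_nonneg _),
      ofReal_norm, ofReal_norm, ofReal_norm, enorm_eq_nnnorm, enorm_eq_nnnorm,
      enorm_eq_nnnorm] at h1
    have h2 : ENNReal.ofReal 2 = (2 : ℝ≥0∞) := by norm_num
    rw [h2] at h1
    have h3 : (‖w‖₊ : ℝ≥0∞) = 2⁻¹ * (2 * ‖w‖₊) := by
      rw [← mul_assoc, ENNReal.inv_mul_cancel (by norm_num) (by norm_num), one_mul]
    rw [h3]
    calc 2⁻¹ * (2 * (‖w‖₊ : ℝ≥0∞)) ≤ 2⁻¹ * ((‖a + w‖₊ : ℝ≥0∞) + ‖a - w‖₊) := by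
          exact mul_le_mul_right h1 _
      _ = 2⁻¹ * ‖a + w‖₊ + 2⁻¹ * ‖a - w‖₊ := by rw [mul_add]
  calc 2 * (‖w‖₊ : ℝ≥0∞) ^ p ≤ 2 * (2⁻¹ * (‖a + w‖₊ : ℝ≥0∞) + 2⁻¹ * ‖a - w‖₊) ^ p := by
        exact mul_le_mul_right (ENNReal.rpow_le_rpow hnn (le_trans zero_le_one hp)) _
    _ ≤ 2 * (2⁻¹ * (‖a + w‖₊ : ℝ≥0∞) ^ p + 2⁻¹ * (‖a - w‖₊ : ℝ≥0∞) ^ p) := by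
        exact mul_le_mul_right
          (ENNReal.rpow_arith_mean_le_arith_mean2_rpow 2⁻¹ 2⁻¹ _ _
            ENNReal.inv_two_add_inv_two hp) _
    _ = (‖a + w‖₊ : ℝ≥0∞) ^ p + (‖a - w‖₊ : ℝ≥0∞) ^ p := by
        rw [mul_add, ← mul_assoc, ← mul_assoc,
          ENNReal.mul_inv_cancel (by norm_num) (by norm_num), one_mul, one_mul]

/-- Rademacher averaging pointwise inequality -/
lemma rad_sum {p : ℝ} (hp : 1 ≤ p) {n : ℕ} (z : Fin n → ℂ) (i : Fin n) :
    (2 : ℝ≥0∞) ^ n * (‖z i‖₊ : ℝ≥0∞) ^ p ≤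
      ∑ ε : Fin n → Bool, (‖∑ j, pSgn (ε j) • z j‖₊ : ℝ≥0∞) ^ p := by
  classical
  set g : (Fin n → Bool) → ℂ := fun ε => ∑ j, pSgn (ε j) • z j with hg
  set e : (Fin n → Bool) ≃ (Fin n → Bool) :=
    (Function.Involutive.toPerm (fun ε => Function.update ε i (!ε i))
      (by intro ε; funext j; by_cases hj : j = i
          · subst hj; simp [Function.update_self]
          · simp [Function.update_of_ne hj]))
  have hpair : ∀ ε, 2 * (‖z i‖₊ : ℝ≥0∞) ^ p ≤
      (‖g ε‖₊ : ℝ≥0∞) ^ p + (‖g (e ε)‖₊ : ℝ≥0∞) ^ p := by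
    intro ε
    set a : ℂ := ∑ j ∈ Finset.univ.erase i, pSgn (ε j) • z j with ha
    set w : ℂ := pSgn (ε i) • z i with hw
    have h1 : g ε = a + w := by
      show (∑ j, pSgn (ε j) • z j) = a + w
      rw [← Finset.add_sum_erase Finset.univ _ (Finset.mem_univ i)]
      rw [add_comm]
    have h2 : g (e ε) = a - w := by
      show (∑ j, pSgn ((Function.update ε i (!ε i)) j) • z j) = a - w
      rw [← Finset.add_sum_erase Finset.univ _ (Finset.mem_univ i)]
      have ht : pSgn ((Function.update ε i (!ε i)) i) • z i = -w := by
        rw [Function.update_self, pSgn_not, hw, neg_smul]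
      have hrest : ∑ j ∈ Finset.univ.erase i, pSgn ((Function.update ε i (!ε i)) j) • z j = a := by
        apply Finset.sum_congr rfl
        intro j hj
        rw [Function.update_of_ne (Finset.ne_of_mem_erase hj)]
      rw [ht, hrest]; ring
    have hwz : (‖w‖₊ : ℝ≥0∞) = ‖z i‖₊ := by
      have : ‖w‖ = ‖z i‖ := by rw [hw, norm_smul, pSgn_norm, one_mul]
      rw [← enorm_eq_nnnorm, ← enorm_eq_nnnorm, ← ofReal_norm, ← ofReal_norm, this]
    rw [h1, h2, ← hwz]
    exact two_point hp a w
  have hflip : ∑ ε, (‖g (e ε)‖₊ : ℝ≥0∞) ^ p = ∑ ε, (‖g ε‖₊ : ℝ≥0∞) ^ p :=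
    Equiv.sum_comp e (fun ε => (‖g ε‖₊ : ℝ≥0∞) ^ p)
  have hsum : ∑ ε : Fin n → Bool, 2 * (‖z i‖₊ : ℝ≥0∞) ^ p ≤
      2 * ∑ ε : Fin n → Bool, (‖g ε‖₊ : ℝ≥0∞) ^ p := by
    calc ∑ ε : Fin n → Bool, 2 * (‖z i‖₊ : ℝ≥0∞) ^ p
        ≤ ∑ ε : Fin n → Bool, ((‖g ε‖₊ : ℝ≥0∞) ^ p + (‖g (e ε)‖₊ : ℝ≥0∞) ^ p) :=
          Finset.sum_le_sum fun ε _ => hpair ε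
      _ = 2 * ∑ ε : Fin n → Bool, (‖g ε‖₊ : ℝ≥0∞) ^ p := by
          rw [Finset.sum_add_distrib, hflip, two_mul]
  have hcard : ∑ ε : Fin n → Bool, 2 * (‖z i‖₊ : ℝ≥0∞) ^ p
      = 2 * ((2 : ℝ≥0∞) ^ n * (‖z i‖₊ : ℝ≥0∞) ^ p) := by
    rw [Finset.sum_const, Finset.card_univ, Fintype.card_fun]
    simp [nsmul_eq_mul, mul_assoc]
    ring
  rw [hcard] at hsum
  exact (ENNReal.mul_le_mul_iff_right (by norm_num) (by norm_num)).1 hsum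

/-- coercion of a finite sum of Lp elements -/
lemma Lp_coeFn_sum {α : Type*} [MeasurableSpace α] {μ : Measure α} {q : ℝ≥0∞} {ι : Type*}
    (s : Finset ι) (f : ι → Lp ℂ q μ) :
    (↑↑(∑ j ∈ s, f j) : α → ℂ) =ᵐ[μ] fun x => ∑ j ∈ s, (f j : α → ℂ) x := by
  classical
  induction s using Finset.cons_induction with
  | empty => simp only [Finset.sum_empty]; exact Lp.coeFn_zero ℂ q μ
  | cons a s ha ih =>
      simp_rw [Finset.sum_cons]
      filter_upwards [Lp.coeFn_add (f a) (∑ j ∈ s, f j), ih] with x h1 h2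
      simp only [h1, Pi.add_apply, h2]

/-- let `(Ω,μ)` be a measure space, `p ∈ (1,∞)`, and `{X₁,…,Xₙ}`,
`{Y₁,…,Yₙ}` measurable partitions of `Ω`. For every bounded linear operator
`R : B(L¹(Ω), L^p(Ω)) → L^p(Ω)` and every `U ∈ B(L¹(Ω), L^p(Ω))`, one has
`(Σᵢ ‖χ_{Xᵢ}·R(χ_{Yᵢ}U)‖_p^p)^{1/p} ≤ ‖R‖ ‖U‖`. Here the operator `χ_{Yᵢ}U` (written
`V i` below) is characterized by `(χ_{Yᵢ}U)(a) = χ_{Yᵢ}·U(a)` a.e. for all `a ∈ L¹(Ω)`,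
and `‖χ_{Xᵢ}·g‖_p` is expressed as the `L^p`-norm of `g` over `Xᵢ`. -/

theorem partition_operator_estimate
    {α : Type*} [MeasurableSpace α] (μ : Measure α)
    (p : ℝ) (hp : 1 < p) [Fact (1 ≤ ENNReal.ofReal p)] (n : ℕ)
    (X Y : Fin n → Set α)
    (hXm : ∀ i, MeasurableSet (X i)) (hXd : Pairwise (Function.onFun Disjoint X))
    (hXu : (⋃ i, X i) = Set.univ)
    (hYm : ∀ i, MeasurableSet (Y i)) (hYd : Pairwise (Function.onFun Disjoint Y))
    (hYu : (⋃ i, Y i) = Set.univ)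
    (R : (Lp ℂ 1 μ →L[ℂ] Lp ℂ (ENNReal.ofReal p) μ) →L[ℂ] Lp ℂ (ENNReal.ofReal p) μ)
    (U : Lp ℂ 1 μ →L[ℂ] Lp ℂ (ENNReal.ofReal p) μ)
    (V : Fin n → (Lp ℂ 1 μ →L[ℂ] Lp ℂ (ENNReal.ofReal p) μ))
    (hV : ∀ (i : Fin n) (a : Lp ℂ 1 μ),
      (V i a : α → ℂ) =ᵐ[μ] (Y i).indicator (U a : α → ℂ)) :
    (∑ i, (eLpNorm (R (V i)) (ENNReal.ofReal p) (μ.restrict (X i))).toReal ^ p) ^ (1 / p)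
      ≤ ‖R‖ * ‖U‖ := by
  classical
  set q := ENNReal.ofReal p with hqdef
  have hp0 : 0 < p := lt_trans one_pos hp
  have hq0 : q ≠ 0 := by
    rw [hqdef, Ne, ENNReal.ofReal_eq_zero, not_le]; exact hp0
  have hqt : q ≠ ∞ := ENNReal.ofReal_ne_top
  have hqr : q.toReal = p := ENNReal.toReal_ofReal hp0.le
  set F : Fin n → Lp ℂ q μ := fun i => R (V i) with hF
  set J : Fin n → ℝ≥0∞ := fun i => ∫⁻ x in X i, (‖(F i : α → ℂ) x‖₊ : ℝ≥0∞) ^ p ∂μ with hJ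
  -- rewrite the summands
  have hsummand : ∀ i, (eLpNorm (F i) q (μ.restrict (X i))).toReal ^ p = (J i).toReal := by
    intro i
    rw [eLpNorm_eq_lintegral_rpow_enorm_toReal hq0 hqt, hqr, ENNReal.toReal_rpow,
      ← ENNReal.rpow_mul, one_div_mul_cancel hp0.ne', ENNReal.rpow_one]
    rfl
  -- the sign-perturbed operators
  set W : (Fin n → Bool) → (Lp ℂ 1 μ →L[ℂ] Lp ℂ q μ) :=
    fun ε => ∑ j, pSgn (ε j) • V j with hW
  set G : (Fin n → Bool) → Lp ℂ q μ := fun ε => R (W ε) with hG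
  -- norm bound on W ε
  have hWnorm : ∀ ε, ‖W ε‖ ≤ ‖U‖ := by
    intro ε
    refine ContinuousLinearMap.opNorm_le_bound _ (norm_nonneg U) (fun a => ?_)
    have hb : ∀ᵐ x ∂μ, ‖(W ε a : α → ℂ) x‖ ≤ ‖(U a : α → ℂ) x‖ := by
      have h1 : W ε a = ∑ j, pSgn (ε j) • (V j a) := by
        simp [hW, ContinuousLinearMap.sum_apply, ContinuousLinearMap.smul_apply]
      have h2 := Lp_coeFn_sum Finset.univ (fun j => pSgn (ε j) • V j a)
      have h3 : ∀ᵐ x ∂μ, ∀ j : Fin n,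
          (↑↑(pSgn (ε j) • V j a) : α → ℂ) x = pSgn (ε j) • (V j a : α → ℂ) x :=
        ae_all_iff.2 fun j => Lp.coeFn_smul _ _
      have h4 : ∀ᵐ x ∂μ, ∀ j : Fin n,
          (V j a : α → ℂ) x = (Y j).indicator (U a : α → ℂ) x :=
        ae_all_iff.2 fun j => hV j a
      filter_upwards [h2, h3, h4] with x h2x h3x h4x
      rw [h1, h2x]
      have hsum : ∑ j, (↑↑(pSgn (ε j) • V j a) : α → ℂ) x
          = ∑ j, pSgn (ε j) • (Y j).indicator (U a : α → ℂ) x := by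
        refine Finset.sum_congr rfl fun j _ => ?_
        rw [h3x j, h4x j]
      rw [hsum]
      by_cases hx : ∃ j, x ∈ Y j
      · obtain ⟨j₀, hj₀⟩ := hx
        have hone : ∑ j, pSgn (ε j) • (Y j).indicator (U a : α → ℂ) x
            = pSgn (ε j₀) • (Y j₀).indicator (U a : α → ℂ) x := by
          refine Finset.sum_eq_single j₀ (fun j _ hj => ?_) (fun h => absurd (Finset.mem_univ _) h)
          have hxj : x ∉ Y j := fun hxj =>
            (Set.disjoint_left.1 (hYd hj)) hxj hj₀
          rw [Set.indicator_of_notMem hxj, smul_zero]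
        rw [hone, Set.indicator_of_mem hj₀, norm_smul, pSgn_norm, one_mul]
      · have hzero : ∀ j : Fin n, (Y j).indicator (U a : α → ℂ) x = 0 := fun j =>
          Set.indicator_of_notMem (fun hxj => hx ⟨j, hxj⟩) _
        simp [hzero, norm_nonneg]
    calc ‖W ε a‖ = (eLpNorm (W ε a : α → ℂ) q μ).toReal := Lp.norm_def _
      _ ≤ (eLpNorm (U a : α → ℂ) q μ).toReal :=
          ENNReal.toReal_mono (Lp.eLpNorm_ne_top _) (eLpNorm_mono_ae hb)
      _ = ‖U a‖ := (Lp.norm_def _).symm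
      _ ≤ ‖U‖ * ‖a‖ := U.le_opNorm a
  -- norm bound on G ε
  have hGnorm : ∀ ε, ‖G ε‖ ≤ ‖R‖ * ‖U‖ := fun ε =>
    le_trans (R.le_opNorm (W ε)) (mul_le_mul_of_nonneg_left (hWnorm ε) (norm_nonneg R))
  -- integral bound for G ε
  have hGint : ∀ ε, ∫⁻ x, (‖(G ε : α → ℂ) x‖₊ : ℝ≥0∞) ^ p ∂μ
      ≤ ENNReal.ofReal ((‖R‖ * ‖U‖) ^ p) := by
    intro ε
    have h1 : ∫⁻ x, (‖(G ε : α → ℂ) x‖₊ : ℝ≥0∞) ^ p ∂μ = (eLpNorm (G ε : α → ℂ) q μ) ^ p := by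
      rw [eLpNorm_eq_lintegral_rpow_enorm_toReal hq0 hqt, hqr, ← ENNReal.rpow_mul,
        one_div_mul_cancel hp0.ne', ENNReal.rpow_one]
      rfl
    have h2 : eLpNorm (G ε : α → ℂ) q μ = ENNReal.ofReal ‖G ε‖ := by
      rw [Lp.norm_def, ENNReal.ofReal_toReal (Lp.eLpNorm_ne_top _)]
    rw [h1, h2]
    calc ENNReal.ofReal ‖G ε‖ ^ p ≤ ENNReal.ofReal (‖R‖ * ‖U‖) ^ p :=
          ENNReal.rpow_le_rpow (ENNReal.ofReal_le_ofReal (hGnorm ε)) hp0.le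
      _ = ENNReal.ofReal ((‖R‖ * ‖U‖) ^ p) :=
          ENNReal.ofReal_rpow_of_nonneg (by positivity) hp0.le
  -- a.e. identification of G ε
  have hGcoe : ∀ ε, (G ε : α → ℂ) =ᵐ[μ] fun x => ∑ j, pSgn (ε j) • (F j : α → ℂ) x := by
    intro ε
    have hGeq : G ε = ∑ j, pSgn (ε j) • F j := by
      simp [hG, hW, hF, map_sum, _root_.map_smul]
    have h1 := Lp_coeFn_sum Finset.univ (fun j => pSgn (ε j) • F j)
    have h2 : ∀ᵐ x ∂μ, ∀ j : Fin n,
        (↑↑(pSgn (ε j) • F j) : α → ℂ) x = pSgn (ε j) • (F j : α → ℂ) x :=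
      ae_all_iff.2 fun j => Lp.coeFn_smul _ _
    rw [hGeq]
    filter_upwards [h1, h2] with x h1x h2x
    rw [h1x]
    exact Finset.sum_congr rfl fun j _ => h2x j
  -- pointwise Rademacher inequality
  have hpt : ∀ᵐ x ∂μ, ∀ i : Fin n,
      (2 : ℝ≥0∞) ^ n * (‖(F i : α → ℂ) x‖₊ : ℝ≥0∞) ^ p
        ≤ ∑ ε : Fin n → Bool, (‖(G ε : α → ℂ) x‖₊ : ℝ≥0∞) ^ p := by
    have hGall : ∀ᵐ x ∂μ, ∀ ε : Fin n → Bool,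
        (G ε : α → ℂ) x = ∑ j, pSgn (ε j) • (F j : α → ℂ) x :=
      ae_all_iff.2 fun ε => hGcoe ε
    filter_upwards [hGall] with x hx i
    have h := rad_sum hp.le (fun j => (F j : α → ℂ) x) i
    have hcongr : ∑ ε : Fin n → Bool, (‖(G ε : α → ℂ) x‖₊ : ℝ≥0∞) ^ p
        = ∑ ε : Fin n → Bool, (‖∑ j, pSgn (ε j) • (F j : α → ℂ) x‖₊ : ℝ≥0∞) ^ p :=
      Finset.sum_congr rfl fun ε _ => by rw [hx ε]
    rw [hcongr]
    exact h
  -- measurability helper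
  have hmeas : ∀ (f : Lp ℂ q μ) (ν : Measure α) , ν ≤ μ →
      AEMeasurable (fun x => (‖(f : α → ℂ) x‖₊ : ℝ≥0∞) ^ p) ν := by
    intro f ν hν
    exact (((Lp.aestronglyMeasurable f).mono_measure hν).aemeasurable.nnnorm.coe_nnreal_ennreal).pow_const p
  -- key estimate per i
  have hkey1 : ∀ i, (2 : ℝ≥0∞) ^ n * J i
      ≤ ∑ ε : Fin n → Bool, ∫⁻ x in X i, (‖(G ε : α → ℂ) x‖₊ : ℝ≥0∞) ^ p ∂μ := by
    intro i
    have h1 : (2 : ℝ≥0∞) ^ n * J i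
        = ∫⁻ x in X i, (2 : ℝ≥0∞) ^ n * (‖(F i : α → ℂ) x‖₊ : ℝ≥0∞) ^ p ∂μ := by
      rw [lintegral_const_mul' _ _ (by simp : (2 : ℝ≥0∞) ^ n ≠ ⊤)]
    have h2 : ∫⁻ x in X i, (2 : ℝ≥0∞) ^ n * (‖(F i : α → ℂ) x‖₊ : ℝ≥0∞) ^ p ∂μ
        ≤ ∫⁻ x in X i, ∑ ε : Fin n → Bool, (‖(G ε : α → ℂ) x‖₊ : ℝ≥0∞) ^ p ∂μ := by
      refine lintegral_mono_ae ?_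
      exact (ae_restrict_of_ae hpt).mono fun x hx => hx i
    have h3 : ∫⁻ x in X i, ∑ ε : Fin n → Bool, (‖(G ε : α → ℂ) x‖₊ : ℝ≥0∞) ^ p ∂μ
        = ∑ ε : Fin n → Bool, ∫⁻ x in X i, (‖(G ε : α → ℂ) x‖₊ : ℝ≥0∞) ^ p ∂μ :=
      lintegral_finset_sum' _ fun ε _ => hmeas (G ε) _ Measure.restrict_le_self
    rw [h1]; rw [← h3]; exact h2
  -- disjointness: sum over i of restricted integrals bounded by total integral
  have hdisj : ∀ (h : α → ℝ≥0∞),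
      ∑ i, ∫⁻ x in X i, h x ∂μ ≤ ∫⁻ x, h x ∂μ := by
    intro h
    have h1 : ∫⁻ x in ⋃ i ∈ Finset.univ, X i, h x ∂μ = ∑ i, ∫⁻ x in X i, h x ∂μ :=
      lintegral_biUnion_finset
        (fun i _ j _ hij => hXd hij) (fun i _ => hXm i) h
    rw [← h1]
    have h2 : (⋃ i ∈ Finset.univ, X i) = Set.univ := by
      rw [← hXu]; simp
    rw [h2, Measure.restrict_univ]
  -- combine
  have hkeysum : ∑ i, J i ≤ ENNReal.ofReal ((‖R‖ * ‖U‖) ^ p) := by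
    have hchain : (2 : ℝ≥0∞) ^ n * ∑ i, J i
        ≤ (2 : ℝ≥0∞) ^ n * ENNReal.ofReal ((‖R‖ * ‖U‖) ^ p) := by
      calc (2 : ℝ≥0∞) ^ n * ∑ i, J i = ∑ i, (2 : ℝ≥0∞) ^ n * J i := by rw [Finset.mul_sum]
        _ ≤ ∑ i, ∑ ε : Fin n → Bool, ∫⁻ x in X i, (‖(G ε : α → ℂ) x‖₊ : ℝ≥0∞) ^ p ∂μ :=
            Finset.sum_le_sum fun i _ => hkey1 i
        _ = ∑ ε : Fin n → Bool, ∑ i, ∫⁻ x in X i, (‖(G ε : α → ℂ) x‖₊ : ℝ≥0∞) ^ p ∂μ :=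
            Finset.sum_comm
        _ ≤ ∑ ε : Fin n → Bool, ∫⁻ x, (‖(G ε : α → ℂ) x‖₊ : ℝ≥0∞) ^ p ∂μ :=
            Finset.sum_le_sum fun ε _ => hdisj _
        _ ≤ ∑ _ε : Fin n → Bool, ENNReal.ofReal ((‖R‖ * ‖U‖) ^ p) :=
            Finset.sum_le_sum fun ε _ => hGint ε
        _ = (2 : ℝ≥0∞) ^ n * ENNReal.ofReal ((‖R‖ * ‖U‖) ^ p) := by
            rw [Finset.sum_const, Finset.card_univ, Fintype.card_fun]
            simp [nsmul_eq_mul]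
    exact (ENNReal.mul_le_mul_iff_right (by simp) (by simp)).1 hchain
  -- finish
  have hJfin : ∀ i ∈ Finset.univ, J i ≠ ⊤ := by
    intro i _
    have hle : J i ≤ ENNReal.ofReal ((‖R‖ * ‖U‖) ^ p) :=
      le_trans (Finset.single_le_sum (f := J) (fun j _ => zero_le) (Finset.mem_univ i)) hkeysum
    exact ne_top_of_le_ne_top ENNReal.ofReal_ne_top hle
  have hfinal : ∑ i, (J i).toReal ≤ (‖R‖ * ‖U‖) ^ p := by
    rw [← ENNReal.toReal_sum hJfin]
    calc (∑ i, J i).toReal ≤ (ENNReal.ofReal ((‖R‖ * ‖U‖) ^ p)).toReal :=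
          ENNReal.toReal_mono ENNReal.ofReal_ne_top hkeysum
      _ = (‖R‖ * ‖U‖) ^ p := ENNReal.toReal_ofReal (by positivity)
  have hLHS : (∑ i, (eLpNorm (F i) q (μ.restrict (X i))).toReal ^ p)
      = ∑ i, (J i).toReal := Finset.sum_congr rfl fun i _ => hsummand i
  rw [hLHS]
  have hnn : 0 ≤ ∑ i, (J i).toReal :=
    Finset.sum_nonneg fun i _ => ENNReal.toReal_nonneg
  calc (∑ i, (J i).toReal) ^ (1 / p) ≤ ((‖R‖ * ‖U‖) ^ p) ^ (1 / p) :=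
        Real.rpow_le_rpow hnn hfinal (by positivity)
    _ = ‖R‖ * ‖U‖ := by
        rw [← Real.rpow_mul (by positivity), mul_one_div_cancel hp0.ne', Real.rpow_one]
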